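/- Fix an integer m ≥ 1 and a symmetric relation c : ℤ → ℤ → Prop satisfying: (periodicity) for all i, j, c i j ↔ c (i + m) (j + m); (separation) for every i ∈ ℤ and every nonzero k ∈ ℤ, ¬ c i (i + k*m); (interval property) for all i < j < k, if c i k then c i j or c j k. Suppose that for every R ≥ 0 there exist i < j with c i j and j − i > R. Then there exist integers a < b with the property that c (a − m*i) (b + m*j) holds for all natural numbers i, j ≥ 0. -/

import Mathlib

/-- Combinatorial abstraction of an intermediate step in Lemma 3.4: if
crossings of the relation `c` occur at arbitrarily large distance, then there
exist `a < b` with `c (a - m*i) (b + m*j)` for all natural numbers `i, j`. -/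
theorem exists_crossing_pair (m : ℤ) (hm : 1 ≤ m) (c : ℤ → ℤ → Prop)
    (hsymm : ∀ i j, c i j → c j i)
    (hper : ∀ i j, c i j ↔ c (i + m) (j + m))
    (hsep : ∀ i : ℤ, ∀ k : ℤ, k ≠ 0 → ¬ c i (i + k * m))
    (hint : ∀ i j k : ℤ, i < j → j < k → c i k → c i j ∨ c j k)
    (hbig : ∀ R : ℤ, 0 ≤ R → ∃ i j : ℤ, i < j ∧ c i j ∧ j - i > R) :
    ∃ a b : ℤ, a < b ∧ ∀ i j : ℕ, c (a - m * (i : ℤ)) (b + m * (j : ℤ)) := by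
  have hm0 : (0:ℤ) < m := by omega
  -- shift lemma: c is invariant under simultaneous translation by n*m
  have hshift : ∀ (n : ℤ) (i j : ℤ), c i j → c (i + n * m) (j + n * m) := by
    intro n
    induction n using Int.induction_on with
    | zero => intro i j h; simpa using h
    | succ k ih =>
        intro i j h
        have h' := (hper (i + (k:ℤ) * m) (j + (k:ℤ) * m)).mp (ih i j h)
        have e1 : i + ((k:ℤ) + 1) * m = i + (k:ℤ) * m + m := by ring
        have e2 : j + ((k:ℤ) + 1) * m = j + (k:ℤ) * m + m := by ring
        rw [e1, e2]; exact h'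
    | pred k ih =>
        intro i j h
        have h' := ih i j h
        have e1 : i + (-(k:ℤ)) * m = (i + (-(k:ℤ) - 1) * m) + m := by ring
        have e2 : j + (-(k:ℤ)) * m = (j + (-(k:ℤ) - 1) * m) + m := by ring
        rw [e1, e2] at h'
        exact (hper _ _).mpr h'
  -- Claim A: some residue pair (r,s) admits arbitrarily large crossings
  have hA : ∃ r s : ℤ, ∀ R : ℤ, ∃ t : ℤ, c r (s + m * t) ∧ s + m * t > R := by
    by_contra hcon
    push_neg at hcon
    choose R hR using hcon
    have hne : ((Finset.Ico (0:ℤ) m) ×ˢ (Finset.Ico (0:ℤ) m)).Nonempty := by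
      refine ⟨(0, 0), ?_⟩
      simp [Finset.mem_product, hm0]
    set B : ℤ := ((Finset.Ico (0:ℤ) m) ×ˢ (Finset.Ico (0:ℤ) m)).sup' hne
      (fun p => R p.1 p.2) with hB
    obtain ⟨i, j, hij, hc, hgap⟩ := hbig (max B 0) (le_max_right _ _)
    set q := i / m with hq
    set r := i % m with hrdef
    have hr0 : 0 ≤ r := Int.emod_nonneg i (by omega)
    have hrm : r < m := Int.emod_lt_of_pos i hm0
    have hieq : m * q + r = i := Int.mul_ediv_add_emod i m
    have hcr : c r (j - m * q) := by
      have h' := hshift (-q) i j hc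
      have e1 : i + (-q) * m = r := by
        have e : i + (-q) * m = i - m * q := by ring
        omega
      have e2 : j + (-q) * m = j - m * q := by ring
      rw [e1, e2] at h'
      exact h'
    set j' := j - m * q with hj'
    set s := j' % m with hsdef
    set t := j' / m with htdef
    have hs0 : 0 ≤ s := Int.emod_nonneg j' (by omega)
    have hsm : s < m := Int.emod_lt_of_pos j' hm0
    have hjeq : m * t + s = j' := Int.mul_ediv_add_emod j' m
    have hcr' : c r (s + m * t) := by
      have : s + m * t = j' := by omega
      rw [this]; exact hcr
    have hle : j' ≤ R r s := by
      have := hR r s t hcr'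
      omega
    have hmem : (r, s) ∈ (Finset.Ico (0:ℤ) m) ×ˢ (Finset.Ico (0:ℤ) m) := by
      simp [Finset.mem_product, hr0, hrm, hs0, hsm]
    have hRB : R r s ≤ B := Finset.le_sup' (fun p => R p.1 p.2) hmem
    have hBmax : B ≤ max B 0 := le_max_left _ _
    -- j' = r + (j - i) > max B 0 ≥ B ≥ R r s ≥ j' : contradiction
    have : j' = r + (j - i) := by omega
    omega
  obtain ⟨r, s, hrs⟩ := hA
  obtain ⟨t0, hct0, hgt0⟩ := hrs r
  have key : ∀ t : ℤ, r < s + m * t → c r (s + m * t) := by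
    intro t ht
    obtain ⟨t'', hc'', hgt''⟩ := hrs (s + m * t)
    have htt : t < t'' := by
      have : m * t < m * t'' := by omega
      exact lt_of_mul_lt_mul_left this (le_of_lt hm0)
    rcases hint r (s + m * t) (s + m * t'') ht hgt'' hc'' with h | h
    · exact h
    · exfalso
      have e : s + m * t'' = (s + m * t) + (t'' - t) * m := by ring
      exact hsep (s + m * t) (t'' - t) (by omega) (e ▸ h)
  refine ⟨r, s + m * t0, hgt0, ?_⟩
  intro i j
  have hij0 : (0:ℤ) ≤ m * ((i:ℤ) + (j:ℤ)) :=
    mul_nonneg (le_of_lt hm0) (by positivity)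
  have h1 : c r (s + m * (t0 + (i:ℤ) + (j:ℤ))) := by
    apply key
    have e : s + m * (t0 + (i:ℤ) + (j:ℤ)) = (s + m * t0) + m * ((i:ℤ) + (j:ℤ)) := by
      ring
    omega
  have h2 := hshift (-(i:ℤ)) _ _ h1
  have e1 : r + (-(i:ℤ)) * m = r - m * (i:ℤ) := by ring
  have e2 : s + m * (t0 + (i:ℤ) + (j:ℤ)) + (-(i:ℤ)) * m = (s + m * t0) + m * (j:ℤ) := by
    ring
  rw [e1, e2] at h2
  exact h2
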